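/- Let G ⊆ ℤ^d be a finite connected set with at least 3 points, regarded as a graph with edges between points at Manhattan distance 1. There exists an agent algorithm with 0 bits of memory and sensing range V = diam(G) that patrols G if and only if G has a Hamiltonian cycle. -/

import Mathlib

open Finset

/-- Manhattan (ℓ¹) norm of an integer vector. -/
def manhattan {d : ℕ} (p : Fin d → ℤ) : ℤ := ∑ i, |p i|

/-- The grid graph vertex set `[n 0] × ⋯ × [n (d-1)]`. -/
def grid {d : ℕ} (n : Fin d → ℕ) : Set (Fin d → ℤ) :=
  {p | ∀ i, 1 ≤ p i ∧ p i ≤ (n i : ℤ)}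

/-- Sensing data `S_V(p)`: relative positions of points of `D` within
Manhattan distance `V` of `p`. -/
def sense {d : ℕ} (D : Set (Fin d → ℤ)) (V : ℕ) (p : Fin d → ℤ) : Set (Fin d → ℤ) :=
  {q | p + q ∈ D ∧ manhattan q ≤ (V : ℤ)}

/-- A deterministic agent algorithm with `b` bits of memory: maps sensing data and a
memory state to a step and a new memory state. -/
structure Agent (d b : ℕ) where
  act : Set (Fin d → ℤ) → (Fin b → Bool) → (Fin d → ℤ) × (Fin b → Bool)

namespace Agent

/-- Validity: at every vertex of `D`, in every memory state, the chosen step is a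
unit step leading to a vertex of `D`. -/
def Valid {d b : ℕ} (A : Agent d b) (D : Set (Fin d → ℤ)) (V : ℕ) : Prop :=
  ∀ p ∈ D, ∀ m, manhattan (A.act (sense D V p) m).1 = 1 ∧
    (A.act (sense D V p) m).1 ∈ sense D V p

/-- The trajectory (position, memory) of the agent after `t` steps, starting from
position `v` and memory state `m`. -/
def traj {d b : ℕ} (A : Agent d b) (D : Set (Fin d → ℤ)) (V : ℕ)
    (v : Fin d → ℤ) (m : Fin b → Bool) : ℕ → (Fin d → ℤ) × (Fin b → Bool)
  | 0 => (v, m)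
  | t + 1 =>
      let s := Agent.traj A D V v m t
      (s.1 + (A.act (sense D V s.1) s.2).1, (A.act (sense D V s.1) s.2).2)

/-- The agent patrols `D`: it is valid, and from any initial position in `D` and any
initial memory state, its trajectory visits every vertex of `D` within finitely many
steps. -/
def Patrols {d b : ℕ} (A : Agent d b) (D : Set (Fin d → ℤ)) (V : ℕ) : Prop :=
  A.Valid D V ∧ ∀ v₁ ∈ D, ∀ m, ∀ v ∈ D, ∃ t, (A.traj D V v₁ m t).1 = v

end Agent

/-- The graph on a set of integer vectors with edges between points at Manhattan
distance 1. -/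
def latticeGraph {d : ℕ} (S : Set (Fin d → ℤ)) : SimpleGraph S where
  Adj p q := manhattan (p.1 - q.1) = 1
  symm := by
    constructor
    intro p q h
    simp only [manhattan, Pi.sub_apply] at h ⊢
    simpa [abs_sub_comm] using h
  loopless := by
    constructor
    intro p h
    simp [manhattan] at h

/-- The `d`-dimensional grid graph `[n 0] × ⋯ × [n (d-1)]`. -/
def gridGraph {d : ℕ} (n : Fin d → ℕ) : SimpleGraph (grid n) :=
  latticeGraph (grid n)

private lemma manhattan_nonneg {d : ℕ} (p : Fin d → ℤ) : 0 ≤ manhattan p :=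
  Finset.sum_nonneg fun i _ => abs_nonneg _

private lemma manhattan_neg {d : ℕ} (p : Fin d → ℤ) : manhattan (-p) = manhattan p := by
  simp [manhattan]

private lemma manhattan_add_le {d : ℕ} (p q : Fin d → ℤ) :
    manhattan (p + q) ≤ manhattan p + manhattan q := by
  simp only [manhattan, ← Finset.sum_add_distrib]
  exact Finset.sum_le_sum fun i _ => abs_add_le _ _

private def iterWalk {α : Type*} {H : SimpleGraph α} (f : α → α)
    (hadj : ∀ p, H.Adj p (f p)) : (n : ℕ) → (p : α) → H.Walk p (f^[n] p)
  | 0, p => SimpleGraph.Walk.nil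
  | n+1, p => (SimpleGraph.Walk.cons (hadj p) (iterWalk f hadj n (f p))).copy rfl
      (Function.iterate_succ_apply f n p).symm

private lemma iterWalk_length {α : Type*} {H : SimpleGraph α} (f : α → α)
    (hadj : ∀ p, H.Adj p (f p)) : ∀ (n : ℕ) (p : α), (iterWalk f hadj n p).length = n
  | 0, _ => rfl
  | n+1, p => by
    rw [iterWalk, SimpleGraph.Walk.length_copy, SimpleGraph.Walk.length_cons,
      iterWalk_length f hadj n (f p)]

private lemma iterWalk_support {α : Type*} {H : SimpleGraph α} (f : α → α)
    (hadj : ∀ p, H.Adj p (f p)) : ∀ (n : ℕ) (p : α),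
    (iterWalk f hadj n p).support = (List.range (n+1)).map (fun i => f^[i] p)
  | 0, p => by simp [iterWalk]
  | n+1, p => by
    rw [iterWalk, SimpleGraph.Walk.support_copy, SimpleGraph.Walk.support_cons,
      iterWalk_support f hadj n (f p), List.range_succ_eq_map]
    simp [List.map_map, Function.comp_def, Function.iterate_succ_apply]

private lemma iterWalk_edges {α : Type*} {H : SimpleGraph α} (f : α → α)
    (hadj : ∀ p, H.Adj p (f p)) : ∀ (n : ℕ) (p : α),
    (iterWalk f hadj n p).edges = (List.range n).map (fun i => s(f^[i] p, f^[i+1] p))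
  | 0, p => by simp [iterWalk]
  | n+1, p => by
    rw [iterWalk, SimpleGraph.Walk.edges_copy, SimpleGraph.Walk.edges_cons,
      iterWalk_edges f hadj n (f p), List.range_succ_eq_map]
    simp [List.map_map, Function.comp_def, Function.iterate_succ_apply]

private lemma walk_support_eq {α : Type*} {H : SimpleGraph α} :
    ∀ {u v : α} (p : H.Walk u v),
      p.support = (List.range (p.length+1)).map p.getVert
  | _, _, SimpleGraph.Walk.nil => by simp [SimpleGraph.Walk.getVert]
  | _, _, SimpleGraph.Walk.cons h q => by
    rw [SimpleGraph.Walk.support_cons, walk_support_eq q, SimpleGraph.Walk.length_cons]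
    conv_rhs => rw [List.range_succ_eq_map]
    simp [List.map_map, Function.comp_def, SimpleGraph.Walk.getVert_cons_succ,
      SimpleGraph.Walk.getVert_zero]

private lemma manhattan_le_length {d : ℕ} {S : Set (Fin d → ℤ)} {x y : S}
    (w : (latticeGraph S).Walk x y) : manhattan (y.1 - x.1) ≤ (w.length : ℤ) := by
  induction w with
  | nil => simp [manhattan]
  | @cons u v z h w ih =>
    have h1 : manhattan (v.1 - u.1) = 1 := by
      have h' : manhattan (u.1 - v.1) = 1 := h
      rw [← manhattan_neg]; simpa [neg_sub] using h'
    have : z.1 - u.1 = (v.1 - u.1) + (z.1 - v.1) := by ring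
    rw [this]
    calc manhattan ((v.1 - u.1) + (z.1 - v.1))
        ≤ manhattan (v.1 - u.1) + manhattan (z.1 - v.1) := manhattan_add_le _ _
      _ ≤ 1 + (w.length : ℤ) := by rw [h1]; linarith
      _ = ((w.length + 1 : ℕ) : ℤ) := by push_cast; ring
      _ ≤ _ := by simp [SimpleGraph.Walk.length_cons]

private lemma shift_eq_self {d : ℕ} {G : Set (Fin d → ℤ)} (hfin : G.Finite)
    {p q : Fin d → ℤ} (hp : p ∈ G) (hq : q ∈ G)
    (h : ∀ x, p + x ∈ G → q + x ∈ G) : q = p := by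
  set T : Fin d → ℤ := q - p with hT
  have hshift : ∀ x ∈ G, x + T ∈ G := by
    intro x hx
    have e : p + (x - p) = x := by ring
    have h2 := h (x - p) (by rw [e]; exact hx)
    have e2 : q + (x - p) = x + T := by rw [hT]; ring
    rwa [e2] at h2
  obtain ⟨x₀, hx₀, hmax⟩ := Finset.exists_max_image hfin.toFinset
    (fun x => ∑ i, x i * T i) ⟨p, hfin.mem_toFinset.mpr hp⟩
  have hx₀G : x₀ ∈ G := hfin.mem_toFinset.mp hx₀
  have hle := hmax (x₀ + T) (hfin.mem_toFinset.mpr (hshift x₀ hx₀G))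
  have hsum : ∑ i, (x₀ + T) i * T i = (∑ i, x₀ i * T i) + ∑ i, T i * T i := by
    rw [← Finset.sum_add_distrib]; apply Finset.sum_congr rfl; intro i _; simp; ring
  have hTT : ∑ i, T i * T i ≤ 0 := by rw [hsum] at hle; linarith
  have hzero : ∀ i ∈ Finset.univ, T i * T i = 0 := by
    rw [← Finset.sum_eq_zero_iff_of_nonneg (fun i _ => mul_self_nonneg (T i))]
    exact le_antisymm hTT (Finset.sum_nonneg fun i _ => mul_self_nonneg _)
  have : T = 0 := by
    funext i
    have := hzero i (Finset.mem_univ i)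
    exact mul_self_eq_zero.mp this
  have : q - p = 0 := this
  funext i
  have := congrFun this i
  simp at this
  linarith [this]

/-- Let `G ⊆ ℤ^d` be finite and connected with at least 3 points.
There is an agent algorithm with `0` bits of memory and sensing range `V = diam(G)`
that patrols `G` iff `G` has a Hamiltonian cycle. -/
theorem zero_bit_full_visibility_patrol_iff_hamiltonian {d : ℕ} (hd : 1 ≤ d)
    (G : Set (Fin d → ℤ)) (hfin : G.Finite) (hcard : 3 ≤ G.ncard)
    (hconn : (latticeGraph G).Connected) :
    (∃ A : Agent d 0, A.Patrols G ((latticeGraph G).diam)) ↔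
      ∃ (v : G) (c : (latticeGraph G).Walk v v), c.IsHamiltonianCycle := by
  classical
  haveI : Finite ↥G := hfin.to_subtype
  obtain ⟨p₀, hp₀⟩ : G.Nonempty := Set.nonempty_of_ncard_ne_zero (by omega)
  haveI : Nonempty ↥G := ⟨⟨p₀, hp₀⟩⟩
  set V := (latticeGraph G).diam with hVdef
  have hediam : (latticeGraph G).ediam ≠ ⊤ := by
    obtain ⟨u, w, huw⟩ := SimpleGraph.exists_edist_eq_ediam_of_finite (G := latticeGraph G)
    rw [← huw]
    exact SimpleGraph.edist_ne_top_iff_reachable.mpr (hconn u w)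
  have hbound : ∀ (p : ↥G) (q : ↥G), manhattan (q.1 - p.1) ≤ (V : ℤ) := by
    intro p q
    obtain ⟨w, hw⟩ := (hconn p q).exists_walk_length_eq_dist
    calc manhattan (q.1 - p.1) ≤ (w.length : ℤ) := manhattan_le_length w
      _ = ((latticeGraph G).dist p q : ℤ) := by rw [hw]
      _ ≤ (V : ℤ) := by exact_mod_cast SimpleGraph.dist_le_diam hediam
  have hsense : ∀ p ∈ G, ∀ x : Fin d → ℤ, x ∈ sense G V p ↔ p + x ∈ G := by
    intro p hp x
    constructor
    · exact fun h => h.1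
    · intro h
      refine ⟨h, ?_⟩
      have := hbound ⟨p, hp⟩ ⟨p + x, h⟩
      simpa using this
  have hinj : ∀ p ∈ G, ∀ q ∈ G, sense G V p = sense G V q → p = q := by
    intro p hp q hq he
    refine shift_eq_self hfin hq hp ?_
    intro x hx
    have h1 : x ∈ sense G V q := (hsense q hq x).mpr hx
    rw [← he] at h1
    exact (hsense p hp x).mp h1
  have hV1 : 1 ≤ V := by
    obtain ⟨a, b, ha, hb, hab⟩ := (Set.one_lt_ncard_iff hfin).mp (by omega)
    have hne : (⟨a, ha⟩ : ↥G) ≠ ⟨b, hb⟩ := by simpa using hab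
    have hpos := hconn.pos_dist_of_ne hne
    have hdd := SimpleGraph.dist_le_diam (G := latticeGraph G)
      (u := (⟨a,ha⟩:↥G)) (v := ⟨b,hb⟩) hediam
    omega
  constructor
  · rintro ⟨A, hval, hvis⟩
    have hmem0 : ∀ m : Fin 0 → Bool, m = (fun i => i.elim0) := fun m => Subsingleton.elim _ _
    set m0 : Fin 0 → Bool := fun i => i.elim0 with hm0
    set f : ↥G → ↥G := fun p =>
      ⟨p.1 + (A.act (sense G V p.1) m0).1, ((hval p.1 p.2 m0).2).1⟩ with hf
    have hstep1 : ∀ p : ↥G, manhattan ((A.act (sense G V p.1) m0).1) = 1 :=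
      fun p => (hval p.1 p.2 m0).1
    have hadj : ∀ p : ↥G, (latticeGraph G).Adj p (f p) := by
      intro p
      show manhattan (p.1 - (p.1 + (A.act (sense G V p.1) m0).1)) = 1
      rw [sub_add_cancel_left, manhattan_neg]
      exact hstep1 p
    have htraj : ∀ (w : ↥G) (m : Fin 0 → Bool) (t : ℕ),
        (A.traj G V w.1 m t).1 = (f^[t] w).1 := by
      intro w m t
      induction t with
      | zero => rfl
      | succ t ih =>
        show (A.traj G V w.1 m t).1
            + (A.act (sense G V (A.traj G V w.1 m t).1) (A.traj G V w.1 m t).2).1 = _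
        rw [hmem0 (A.traj G V w.1 m t).2, ih, Function.iterate_succ_apply']
    obtain ⟨i, j, hij, hije⟩ := Finite.exists_ne_map_eq_of_infinite
      (fun t : ℕ => f^[t] ⟨p₀, hp₀⟩)
    have hper : ∃ (q : ↥G) (r : ℕ), 0 < r ∧ f^[r] q = q := by
      rcases Nat.lt_or_ge i j with h | h
      · exact ⟨f^[i] ⟨p₀, hp₀⟩, j - i, by omega, by
          rw [← Function.iterate_add_apply, show j - i + i = j from by omega]
          exact hije.symm⟩
      · exact ⟨f^[j] ⟨p₀, hp₀⟩, i - j, by omega, by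
          rw [← Function.iterate_add_apply, show i - j + j = i from by omega]
          exact hije⟩
    obtain ⟨q, r, hr, hqr⟩ := hper
    have hPex : ∃ k, 0 < k ∧ f^[k] q = q := ⟨r, hr, hqr⟩
    set k := Nat.find hPex with hk
    obtain ⟨hkpos, hkq⟩ := Nat.find_spec hPex
    have hmin : ∀ m < k, ¬(0 < m ∧ f^[m] q = q) := fun m hm => Nat.find_min hPex hm
    have hmul : ∀ s, f^[k * s] q = q := by
      intro s
      induction s with
      | zero => simp
      | succ s ih => rw [Nat.mul_succ, Function.iterate_add_apply, hkq, ih]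
    have hmod : ∀ t, f^[t] q = f^[t % k] q := by
      intro t
      conv_lhs => rw [show t = t % k + k * (t / k) from (Nat.mod_add_div t k).symm]
      rw [Function.iterate_add_apply, hmul]
    have hdist : ∀ a < k, ∀ b < k, f^[a] q = f^[b] q → a = b := by
      have aux : ∀ a b, a < b → b < k → f^[a] q = f^[b] q → False := by
        intro a b hab hbk he
        have h1 : f^[k - b + a] q = q := by
          rw [Function.iterate_add_apply, he, ← Function.iterate_add_apply,
            show k - b + b = k from by omega, hkq]
        exact hmin (k - b + a) (by omega) ⟨by omega, h1⟩
      intro a ha b hb he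
      rcases Nat.lt_trichotomy a b with h | h | h
      · exact absurd he (fun he' => aux a b h hb he')
      · exact h
      · exact absurd he.symm (fun he' => aux b a h ha he')
    have hmodeq : ∀ a b, f^[a] q = f^[b] q → a % k = b % k := by
      intro a b he
      exact hdist _ (Nat.mod_lt _ hkpos) _ (Nat.mod_lt _ hkpos)
        (by rw [← hmod, ← hmod]; exact he)
    have hcover : ∀ w : ↥G, ∃ t < k, f^[t] q = w := by
      intro w
      obtain ⟨t, ht⟩ := hvis q.1 q.2 m0 w.1 w.2
      refine ⟨t % k, Nat.mod_lt _ hkpos, ?_⟩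
      rw [← hmod]
      exact Subtype.ext ((htraj q m0 t).symm.trans ht)
    have hk3 : 3 ≤ k := by
      have hsurj : Function.Surjective (fun i : Fin k => f^[i.1] q) := by
        intro w
        obtain ⟨t, htk, hte⟩ := hcover w
        exact ⟨⟨t, htk⟩, hte⟩
      have hle := Nat.card_le_card_of_surjective _ hsurj
      simp only [Nat.card_eq_fintype_card, Fintype.card_fin] at hle
      have hG : Nat.card ↥G = G.ncard := Nat.card_coe_set_eq G
      omega
    refine ⟨q, (iterWalk f hadj k q).copy rfl hkq, ?_⟩
    have htail : ((iterWalk f hadj k q).copy rfl hkq).support.tail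
        = (List.range k).map (fun i => f^[i+1] q) := by
      rw [SimpleGraph.Walk.support_copy, iterWalk_support, List.range_succ_eq_map]
      simp [List.map_map, Function.comp_def]
    have htnodup : ((List.range k).map (fun i => f^[i+1] q)).Nodup := by
      refine List.Nodup.map_on ?_ List.nodup_range
      intro a ha b hb he
      rw [List.mem_range] at ha hb
      have e := hmodeq _ _ he
      rcases Nat.lt_or_ge (a+1) k with h1 | h1 <;> rcases Nat.lt_or_ge (b+1) k with h2 | h2
      · rw [Nat.mod_eq_of_lt h1, Nat.mod_eq_of_lt h2] at e; omega
      · rw [Nat.mod_eq_of_lt h1, show b+1 = k from by omega, Nat.mod_self] at e; omega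
      · rw [show a+1 = k from by omega, Nat.mod_self, Nat.mod_eq_of_lt h2] at e; omega
      · omega
    rw [SimpleGraph.Walk.isHamiltonianCycle_iff_isCycle_and_support_count_tail_eq_one]
    constructor
    · refine ⟨⟨⟨?_⟩, ?_⟩, ?_⟩
      · -- edges nodup
        have hedges : ((iterWalk f hadj k q).copy rfl hkq).edges
            = (List.range k).map (fun i => s(f^[i] q, f^[i+1] q)) := by
          rw [SimpleGraph.Walk.edges_copy, iterWalk_edges]
        rw [hedges]
        refine List.Nodup.map_on ?_ List.nodup_range
        intro a ha b hb he
        rw [List.mem_range] at ha hb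
        rw [Sym2.eq_iff] at he
        rcases he with ⟨h1, h2⟩ | ⟨h1, h2⟩
        · exact hdist a ha b hb h1
        · exfalso
          have e1 : a % k = (b+1) % k := hmodeq _ _ h1
          have e2 : (a+1) % k = b % k := hmodeq _ _ h2
          rw [Nat.mod_eq_of_lt ha] at e1
          rw [Nat.mod_eq_of_lt hb] at e2
          rcases Nat.lt_or_ge (b+1) k with hbk | hbk
          · rw [Nat.mod_eq_of_lt hbk] at e1
            subst e1
            rcases Nat.lt_or_ge (b+1+1) k with hbk2 | hbk2
            · rw [Nat.mod_eq_of_lt hbk2] at e2; omega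
            · rw [show b+1+1 = k from by omega, Nat.mod_self] at e2; omega
          · rw [show b+1 = k from by omega, Nat.mod_self] at e1
            subst e1
            rw [Nat.mod_eq_of_lt (show 0+1 < k from by omega)] at e2
            omega
      · -- ne nil
        intro hnil
        have hlen := congrArg SimpleGraph.Walk.length hnil
        rw [SimpleGraph.Walk.length_copy, iterWalk_length] at hlen
        simp only [SimpleGraph.Walk.length_nil] at hlen
        omega
      · rw [htail]; exact htnodup
    · intro a
      rw [htail]
      refine @List.count_eq_one_of_mem _ instBEqOfDecidableEq _ a _ htnodup ?_
      rw [List.mem_map]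
      obtain ⟨t, htk, hte⟩ := hcover a
      rcases Nat.eq_zero_or_pos t with h0 | hpos
      · refine ⟨k-1, by rw [List.mem_range]; omega, ?_⟩
        show f^[k-1+1] q = a
        rw [show k-1+1 = k from by omega, hkq]
        rw [h0] at hte
        exact hte
      · refine ⟨t-1, by rw [List.mem_range]; omega, ?_⟩
        show f^[t-1+1] q = a
        rw [show t-1+1 = t from by omega]
        exact hte
  · rintro ⟨v, c, hc⟩
    set n := c.length with hn
    have hn3 : 3 ≤ n := hc.isCycle.three_le_length
    set x : ℕ → ↥G := fun i => c.getVert i with hx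
    have hx0 : x 0 = v := SimpleGraph.Walk.getVert_zero c
    have hxn : x n = v := SimpleGraph.Walk.getVert_length c
    have hadjx : ∀ i < n, (latticeGraph G).Adj (x i) (x (i+1)) :=
      fun i hi => SimpleGraph.Walk.adj_getVert_succ c hi
    have hsupp : c.support = (List.range (n+1)).map x := walk_support_eq c
    have htnodup := hc.isCycle.support_nodup
    have htail : c.support.tail = (List.range n).map (fun i => x (i+1)) := by
      rw [hsupp, List.range_succ_eq_map]
      simp [List.map_map, Function.comp_def]
    rw [htail] at htnodup
    have hinj1 : ∀ a < n, ∀ b < n, x (a+1) = x (b+1) → a = b := by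
      intro a ha b hb he
      exact List.inj_on_of_nodup_map htnodup (List.mem_range.mpr ha)
        (List.mem_range.mpr hb) he
    have hxinj : ∀ a < n, ∀ b < n, x a = x b → a = b := by
      intro a ha b hb he
      rcases Nat.eq_zero_or_pos a with ha0 | hapos <;>
        rcases Nat.eq_zero_or_pos b with hb0 | hbpos
      · omega
      · exfalso
        rw [ha0] at he
        have hbn : x ((b-1)+1) = x ((n-1)+1) := by
          rw [show (b-1)+1 = b from by omega, show (n-1)+1 = n from by omega, hxn, ← hx0]
          exact he.symm
        have := hinj1 _ (by omega) _ (by omega) hbn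
        omega
      · exfalso
        rw [hb0] at he
        have hbn : x ((a-1)+1) = x ((n-1)+1) := by
          rw [show (a-1)+1 = a from by omega, show (n-1)+1 = n from by omega, hxn, ← hx0]
          exact he
        have := hinj1 _ (by omega) _ (by omega) hbn
        omega
      · have hab : x ((a-1)+1) = x ((b-1)+1) := by
          rw [show (a-1)+1 = a from by omega, show (b-1)+1 = b from by omega]
          exact he
        have := hinj1 _ (by omega) _ (by omega) hab
        omega
    have hmemx : ∀ w : ↥G, ∃ i < n, x i = w := by
      intro w
      have hws : w ∈ c.support := hc.mem_support w
      rw [SimpleGraph.Walk.mem_support_iff_exists_getVert] at hws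
      obtain ⟨t, hte, htl⟩ := hws
      rcases Nat.lt_or_ge t n with h | h
      · exact ⟨t, h, hte⟩
      · refine ⟨0, by omega, ?_⟩
        rw [hx0, ← hxn, show n = t from by omega]
        exact hte
    have hmodlt : ∀ m : ℕ, m % n < n := fun m => Nat.mod_lt _ (by omega)
    set y : ℕ → ↥G := fun m => x (m % n) with hy
    have hsuccmod : ∀ m : ℕ, x (m % n + 1) = y (m+1) := by
      intro m
      have h1 : (m+1) % n = (m % n + 1) % n := by
        conv_lhs => rw [Nat.add_mod, Nat.mod_eq_of_lt (show 1 < n from by omega)]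
      show x (m % n + 1) = x ((m+1) % n)
      rcases Nat.lt_or_ge (m % n + 1) n with h | h
      · rw [h1, Nat.mod_eq_of_lt h]
      · have h2 : m % n + 1 = n := by have := hmodlt m; omega
        rw [h2, hxn, h1, h2, Nat.mod_self, hx0]
    set NEXT : ↥G → ↥G := fun p =>
      if h : ∃ i, i < n ∧ x i = p then x (Classical.choose h + 1) else p with hNEXT
    have hNy : ∀ m : ℕ, NEXT (y m) = y (m+1) := by
      intro m
      have hex : ∃ i, i < n ∧ x i = y m := ⟨m % n, hmodlt m, rfl⟩
      show (if h : ∃ i, i < n ∧ x i = y m then x (Classical.choose h + 1) else y m) = y (m+1)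
      rw [dif_pos hex]
      have hspec := Classical.choose_spec hex
      have hce : Classical.choose hex = m % n :=
        hxinj _ hspec.1 _ (hmodlt m) (hspec.2.trans (by rfl))
      rw [hce]
      exact hsuccmod m
    have hNadj : ∀ p : ↥G, (latticeGraph G).Adj p (NEXT p) := by
      intro p
      obtain ⟨i, hi, hie⟩ := hmemx p
      have hpy : p = y i := by
        rw [hy]
        show p = x (i % n)
        rw [Nat.mod_eq_of_lt hi, hie]
      rw [hpy, hNy, ← hsuccmod i]
      show (latticeGraph G).Adj (x (i % n)) (x (i % n + 1))
      exact hadjx _ (hmodlt i)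
    have hNit : ∀ (i t : ℕ), NEXT^[t] (y i) = y (i + t) := by
      intro i t
      induction t with
      | zero => rfl
      | succ t ih =>
        rw [Function.iterate_succ_apply', ih, hNy]
        rfl
    set stepf : Set (Fin d → ℤ) → (Fin d → ℤ) := fun S =>
      if h : ∃ p₁, p₁ ∈ G ∧ sense G V p₁ = S then
        (NEXT ⟨Classical.choose h, (Classical.choose_spec h).1⟩).1 - Classical.choose h
      else fun _ => 0 with hstepf
    have hact : ∀ p : ↥G, stepf (sense G V p.1) = (NEXT p).1 - p.1 := by
      intro p
      have hex : ∃ p₁, p₁ ∈ G ∧ sense G V p₁ = sense G V p.1 := ⟨p.1, p.2, rfl⟩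
      show (if h : ∃ p₁, p₁ ∈ G ∧ sense G V p₁ = sense G V p.1 then
        (NEXT ⟨Classical.choose h, (Classical.choose_spec h).1⟩).1 - Classical.choose h
      else fun _ => 0) = (NEXT p).1 - p.1
      rw [dif_pos hex]
      have h1 := (Classical.choose_spec hex).1
      have h2 := (Classical.choose_spec hex).2
      have he : Classical.choose hex = p.1 := hinj _ h1 _ p.2 h2
      have hsub : (⟨Classical.choose hex, h1⟩ : ↥G) = p := Subtype.ext he
      rw [hsub, he]
    refine ⟨⟨fun S m => (stepf S, m)⟩, ?_, ?_⟩
    · intro p hp m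
      constructor
      · show manhattan (stepf (sense G V p)) = 1
        rw [hact ⟨p, hp⟩]
        exact (hNadj ⟨p, hp⟩).symm
      · show stepf (sense G V p) ∈ sense G V p
        rw [hact ⟨p, hp⟩]
        refine (hsense p hp _).mpr ?_
        have he : p + ((NEXT ⟨p, hp⟩).1 - p) = (NEXT ⟨p, hp⟩).1 := by ring
        rw [he]
        exact (NEXT ⟨p, hp⟩).2
    · intro v₁ hv₁ m w hw
      set r : ↥G := ⟨v₁, hv₁⟩ with hr
      have htr : ∀ t, ((⟨fun S m => (stepf S, m)⟩ : Agent d 0).traj G V v₁ m t).1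
          = (NEXT^[t] r).1 := by
        intro t
        induction t with
        | zero => rfl
        | succ t ih =>
          show ((⟨fun S m => (stepf S, m)⟩ : Agent d 0).traj G V v₁ m t).1
              + stepf (sense G V ((⟨fun S m => (stepf S, m)⟩ : Agent d 0).traj G V v₁ m t).1)
              = (NEXT^[t+1] r).1
          rw [ih, hact (NEXT^[t] r), Function.iterate_succ_apply']
          ring
      obtain ⟨i, hi, hie⟩ := hmemx r
      obtain ⟨j, hj, hje⟩ := hmemx ⟨w, hw⟩
      have hry : r = y i := by
        rw [hy]
        show r = x (i % n)
        rw [Nat.mod_eq_of_lt hi, hie]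
      refine ⟨(n - i) + j, ?_⟩
      rw [htr, hry, hNit, show i + ((n - i) + j) = n + j from by omega]
      show (y (n+j)).1 = w
      have hw2 : y (n + j) = ⟨w, hw⟩ := by
        show x ((n+j) % n) = ⟨w, hw⟩
        rw [Nat.add_mod_left, Nat.mod_eq_of_lt hj, hje]
      rw [hw2]
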